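/- (Theorem 3.3, control to a target implies dual observation) Let 0 ≤ T0 < T1 < T2 and ℓ, ε > 0. Assume (C): for every y_d ∈ L²(Ω) with ⟨P y_d, y_d⟩ := Σ_{j≥1} λ_j ⟨y_d, Φ_j⟩² < ∞, there exists f ∈ L²(Ω) such that (1/ℓ) ‖1_ω f‖² + (1/ε) ‖S(T2−T1)(1_ω f) − y_d‖² ≤ ⟨P y_d, y_d⟩. Then (O) holds: for every u0 ∈ L²(Ω), ⟨P⁻¹ u0, u0⟩ := Σ_{j≥1} λ_j^{−1} ⟨u0, Φ_j⟩² ≤ ℓ ‖S(T2−T1) u0‖_ω² + ε ‖u0‖². -/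

import Mathlib

open MeasureTheory Set Filter
open scoped RealInnerProductSpace

noncomputable section

/-- The heat semigroup `S(t)u0 = sum_j e^{-lam_j t} <u0, Phi_j> Phi_j` on `L2(Omega)`,
given a Hilbert basis `B` of eigenfunctions and eigenvalues `lam`. -/
noncomputable def heatSG {d : ℕ} {Ω : Set (EuclideanSpace ℝ (Fin d))}
    (B : HilbertBasis ℕ ℝ (Lp ℝ 2 (volume.restrict Ω))) (lam : ℕ → ℝ)
    (t : ℝ) (u : Lp ℝ 2 (volume.restrict Ω)) : Lp ℝ 2 (volume.restrict Ω) :=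
  ∑' j, (Real.exp (-(lam j) * t) * ⟪u, B j⟫) • B j

/-- Multiplication by the indicator function `1_omega` on `L2(Omega)`. -/
noncomputable def indLp {d : ℕ} {Ω : Set (EuclideanSpace ℝ (Fin d))}
    (ω : Set (EuclideanSpace ℝ (Fin d))) (hω : MeasurableSet ω)
    (f : Lp ℝ 2 (volume.restrict Ω)) : Lp ℝ 2 (volume.restrict Ω) :=
  MemLp.toLp (ω.indicator ⇑f) ((Lp.memLp f).indicator hω)

section Aux

variable {d : ℕ} {Ω : Set (EuclideanSpace ℝ (Fin d))}

lemma coeff_sq_summable (B : HilbertBasis ℕ ℝ (Lp ℝ 2 (volume.restrict Ω)))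
    (u : Lp ℝ 2 (volume.restrict Ω)) : Summable (fun j => ⟪u, B j⟫ ^ 2) := by
  have h := B.summable_inner_mul_inner u u
  refine h.congr fun j => ?_
  rw [real_inner_comm (B j) u, ← sq]

lemma heat_hasSum (B : HilbertBasis ℕ ℝ (Lp ℝ 2 (volume.restrict Ω)))
    (lam : ℕ → ℝ) (hpos : ∀ j, 0 < lam j) {t : ℝ} (ht : 0 ≤ t)
    (u : Lp ℝ 2 (volume.restrict Ω)) :
    HasSum (fun j => (Real.exp (-(lam j) * t) * ⟪u, B j⟫) • B j) (heatSG B lam t u) := by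
  have hmem : Memℓp (fun j => Real.exp (-(lam j) * t) * ⟪u, B j⟫) 2 := by
    apply memℓp_gen
    have h2 : Summable (fun j => ⟪u, B j⟫ ^ 2) := coeff_sq_summable B u
    refine Summable.of_nonneg_of_le (fun j => ?_) (fun j => ?_) h2
    · positivity
    · have he : Real.exp (-(lam j) * t) ≤ 1 := by
        rw [Real.exp_le_one_iff]
        have := (hpos j).le
        nlinarith
      have he0 : 0 ≤ Real.exp (-(lam j) * t) := (Real.exp_pos _).le
      have : ‖Real.exp (-(lam j) * t) * ⟪u, B j⟫‖ ≤ ‖⟪u, B j⟫‖ := by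
        rw [norm_mul]
        calc ‖Real.exp (-(lam j) * t)‖ * ‖⟪u, B j⟫‖ ≤ 1 * ‖⟪u, B j⟫‖ := by
              apply mul_le_mul_of_nonneg_right _ (norm_nonneg _)
              rwa [Real.norm_of_nonneg he0]
          _ = ‖⟪u, B j⟫‖ := one_mul _
      have h1 : (ENNReal.toReal 2) = ((2:ℕ):ℝ) := by norm_num
      rw [h1, Real.rpow_natCast]
      calc ‖Real.exp (-(lam j) * t) * ⟪u, B j⟫‖ ^ (2 : ℕ)
          ≤ ‖⟪u, B j⟫‖ ^ (2 : ℕ) := by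
            exact pow_le_pow_left₀ (norm_nonneg _) this 2
        _ = ⟪u, B j⟫ ^ 2 := by rw [Real.norm_eq_abs, sq_abs]
  have h := B.hasSum_repr_symm ⟨_, hmem⟩
  have hs : Summable (fun j => (Real.exp (-(lam j) * t) * ⟪u, B j⟫) • B j) := h.summable
  unfold heatSG
  exact hs.hasSum

lemma heat_inner_hasSum (B : HilbertBasis ℕ ℝ (Lp ℝ 2 (volume.restrict Ω)))
    (lam : ℕ → ℝ) (hpos : ∀ j, 0 < lam j) {t : ℝ} (ht : 0 ≤ t)
    (u v : Lp ℝ 2 (volume.restrict Ω)) :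
    HasSum (fun j => Real.exp (-(lam j) * t) * ⟪u, B j⟫ * ⟪v, B j⟫)
      ⟪v, heatSG B lam t u⟫ := by
  have h := (heat_hasSum B lam hpos ht u).mapL (innerSL ℝ v)
  refine HasSum.congr_fun h fun j => ?_
  simp [inner_smul_right, mul_assoc]

lemma heat_symm (B : HilbertBasis ℕ ℝ (Lp ℝ 2 (volume.restrict Ω)))
    (lam : ℕ → ℝ) (hpos : ∀ j, 0 < lam j) {t : ℝ} (ht : 0 ≤ t)
    (u v : Lp ℝ 2 (volume.restrict Ω)) :
    ⟪heatSG B lam t u, v⟫ = ⟪u, heatSG B lam t v⟫ := by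
  have h1 := heat_inner_hasSum B lam hpos ht u v
  have h2 := heat_inner_hasSum B lam hpos ht v u
  have h2' : HasSum (fun j => Real.exp (-(lam j) * t) * ⟪u, B j⟫ * ⟪v, B j⟫)
      ⟪u, heatSG B lam t v⟫ := by
    refine HasSum.congr_fun h2 fun j => ?_
    ring
  rw [real_inner_comm]
  exact h1.unique h2'

lemma indLp_inner_left {ω : Set (EuclideanSpace ℝ (Fin d))} (hωm : MeasurableSet ω)
    (g f : Lp ℝ 2 (volume.restrict Ω)) :
    ⟪g, indLp ω hωm f⟫ = ⟪indLp ω hωm g, f⟫ := by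
  rw [MeasureTheory.L2.inner_def, MeasureTheory.L2.inner_def]
  apply integral_congr_ae
  have hf : (indLp ω hωm f : _ → ℝ) =ᵐ[volume.restrict Ω] ω.indicator ⇑f := MemLp.coeFn_toLp _
  have hg : (indLp ω hωm g : _ → ℝ) =ᵐ[volume.restrict Ω] ω.indicator ⇑g := MemLp.coeFn_toLp _
  filter_upwards [hf, hg] with a haf hag
  rw [show (indLp ω hωm f) a = (ω.indicator ⇑f) a from haf,
    show (indLp ω hωm g) a = (ω.indicator ⇑g) a from hag]
  by_cases h : a ∈ ω <;> simp [Set.indicator, h]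

lemma indLp_inner_both {ω : Set (EuclideanSpace ℝ (Fin d))} (hωm : MeasurableSet ω)
    (g f : Lp ℝ 2 (volume.restrict Ω)) :
    ⟪g, indLp ω hωm f⟫ = ⟪indLp ω hωm g, indLp ω hωm f⟫ := by
  rw [MeasureTheory.L2.inner_def, MeasureTheory.L2.inner_def]
  apply integral_congr_ae
  have hf : (indLp ω hωm f : _ → ℝ) =ᵐ[volume.restrict Ω] ω.indicator ⇑f := MemLp.coeFn_toLp _
  have hg : (indLp ω hωm g : _ → ℝ) =ᵐ[volume.restrict Ω] ω.indicator ⇑g := MemLp.coeFn_toLp _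
  filter_upwards [hf, hg] with a haf hag
  rw [show (indLp ω hωm f) a = (ω.indicator ⇑f) a from haf,
    show (indLp ω hωm g) a = (ω.indicator ⇑g) a from hag]
  by_cases h : a ∈ ω <;> simp [Set.indicator, h]

end Aux

set_option maxHeartbeats 1000000 in
/-- Theorem 3.3, control to a target implies dual observation. -/
theorem target_control_implies_dual_observation
    (d : ℕ) (hd : 1 ≤ d) (Ω ω : Set (EuclideanSpace ℝ (Fin d)))
    (hΩo : IsOpen Ω) (hΩb : Bornology.IsBounded Ω) (hΩc : IsConnected Ω)
    (hωo : IsOpen ω) (hωne : ω.Nonempty) (hωΩ : ω ⊆ Ω) (hωm : MeasurableSet ω)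
    (B : HilbertBasis ℕ ℝ (Lp ℝ 2 (volume.restrict Ω)))
    (lam : ℕ → ℝ) (hpos : ∀ j, 0 < lam j) (hmono : Monotone lam)
    (hlim : Tendsto lam atTop atTop)
    (T0 T1 T2 : ℝ) (hT0 : 0 ≤ T0) (hT01 : T0 < T1) (hT12 : T1 < T2)
    (ℓ ε : ℝ) (hℓ : 0 < ℓ) (hε : 0 < ε)
    -- (C)
    (hC : ∀ yd : Lp ℝ 2 (volume.restrict Ω),
      Summable (fun j => lam j * ⟪yd, B j⟫ ^ 2) →
      ∃ f : Lp ℝ 2 (volume.restrict Ω),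
        (1 / ℓ) * ‖indLp ω hωm f‖ ^ 2 +
          (1 / ε) * ‖heatSG B lam (T2 - T1) (indLp ω hωm f) - yd‖ ^ 2
        ≤ ∑' j, lam j * ⟪yd, B j⟫ ^ 2) :
    -- (O)
    ∀ u0 : Lp ℝ 2 (volume.restrict Ω),
      (∑' j, (lam j)⁻¹ * ⟪u0, B j⟫ ^ 2) ≤
        ℓ * ‖indLp ω hωm (heatSG B lam (T2 - T1) u0)‖ ^ 2 + ε * ‖u0‖ ^ 2 := by
  classical
  intro u0
  have ht : (0:ℝ) ≤ T2 - T1 := by linarith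
  set X := ‖indLp ω hωm (heatSG B lam (T2 - T1) u0)‖ with hX
  set Y := ‖u0‖ with hY
  have hX0 : 0 ≤ X := norm_nonneg _
  have hY0 : 0 ≤ Y := norm_nonneg _
  have hR : (0:ℝ) ≤ ℓ * X ^ 2 + ε * Y ^ 2 := by positivity
  refine tsum_le_of_sum_le' hR fun s => ?_
  set yd := ∑ j ∈ s, ((lam j)⁻¹ * ⟪u0, B j⟫) • B j with hyd
  have horth := orthonormal_iff_ite.mp B.orthonormal
  have hrep : ∀ k, ⟪yd, B k⟫ = if k ∈ s then (lam k)⁻¹ * ⟪u0, B k⟫ else 0 := by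
    intro k
    rw [hyd, sum_inner]
    have : ∀ j ∈ s, ⟪((lam j)⁻¹ * ⟪u0, B j⟫) • B j, B k⟫
        = if j = k then (lam j)⁻¹ * ⟪u0, B j⟫ else 0 := by
      intro j _
      rw [real_inner_smul_left, horth j k]
      by_cases h : j = k <;> simp [h]
    rw [Finset.sum_congr rfl this, Finset.sum_ite_eq' s k (fun j => (lam j)⁻¹ * ⟪u0, B j⟫)]
  have hzero : ∀ k ∉ s, lam k * ⟪yd, B k⟫ ^ 2 = 0 := by
    intro k hk; rw [hrep k, if_neg hk]; ring
  have hsum_yd : Summable (fun j => lam j * ⟪yd, B j⟫ ^ 2) :=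
    summable_of_ne_finset_zero hzero
  have htsum : (∑' j, lam j * ⟪yd, B j⟫ ^ 2) = ∑ j ∈ s, (lam j)⁻¹ * ⟪u0, B j⟫ ^ 2 := by
    rw [tsum_eq_sum hzero]
    refine Finset.sum_congr rfl fun j hj => ?_
    rw [hrep j, if_pos hj]
    have h0 : lam j ≠ 0 := (hpos j).ne'
    field_simp
  set P := ∑ j ∈ s, (lam j)⁻¹ * ⟪u0, B j⟫ ^ 2 with hPdef
  have hP0 : 0 ≤ P := by
    apply Finset.sum_nonneg
    intro j _
    have := (hpos j).le
    positivity
  have hPinner : ⟪u0, yd⟫ = P := by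
    rw [hyd, inner_sum]
    refine Finset.sum_congr rfl fun j hj => ?_
    rw [real_inner_smul_right]
    ring
  obtain ⟨f, hf⟩ := hC yd hsum_yd
  rw [htsum] at hf
  set A := ‖indLp ω hωm f‖ with hA
  set Bq := ‖heatSG B lam (T2 - T1) (indLp ω hωm f) - yd‖ with hBq
  have hA0 : 0 ≤ A := norm_nonneg _
  have hBq0 : 0 ≤ Bq := norm_nonneg _
  have hinner1 : ⟪u0, heatSG B lam (T2 - T1) (indLp ω hωm f)⟫ ≤ X * A := by
    rw [← heat_symm B lam hpos ht u0 (indLp ω hωm f), indLp_inner_both hωm]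
    exact real_inner_le_norm _ _
  have hinner2 : ⟪u0, yd - heatSG B lam (T2 - T1) (indLp ω hωm f)⟫ ≤ Y * Bq := by
    calc ⟪u0, yd - heatSG B lam (T2 - T1) (indLp ω hωm f)⟫
        ≤ ‖u0‖ * ‖yd - heatSG B lam (T2 - T1) (indLp ω hωm f)‖ := real_inner_le_norm _ _
      _ = Y * Bq := by rw [norm_sub_rev]
  have hPle : P ≤ Y * Bq + X * A := by
    have hsplit : ⟪u0, yd⟫ = ⟪u0, yd - heatSG B lam (T2 - T1) (indLp ω hωm f)⟫
        + ⟪u0, heatSG B lam (T2 - T1) (indLp ω hωm f)⟫ := by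
      rw [← inner_add_right]
      congr 1
      abel
    rw [← hPinner, hsplit]
    linarith
  -- algebra
  have key1 : ℓ * ε * ((Y * Bq + X * A) ^ 2) ≤ (ℓ * X ^ 2 + ε * Y ^ 2) * (ε * A ^ 2 + ℓ * Bq ^ 2) := by
    nlinarith [sq_nonneg (ℓ * X * Bq - ε * Y * A)]
  have hf' : ε * A ^ 2 + ℓ * Bq ^ 2 ≤ ℓ * ε * P := by
    have h := mul_le_mul_of_nonneg_left hf (mul_pos hℓ hε).le
    have heq : ℓ * ε * ((1 / ℓ) * A ^ 2 + (1 / ε) * Bq ^ 2) = ε * A ^ 2 + ℓ * Bq ^ 2 := by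
      field_simp
    rwa [heq] at h
  have hsq : P * P ≤ (Y * Bq + X * A) ^ 2 := by nlinarith
  have h4 : ℓ * ε * (P * P) ≤ (ℓ * X ^ 2 + ε * Y ^ 2) * (ℓ * ε * P) :=
    calc ℓ * ε * (P * P) ≤ ℓ * ε * ((Y * Bq + X * A) ^ 2) := by
          apply mul_le_mul_of_nonneg_left hsq (mul_pos hℓ hε).le
      _ ≤ (ℓ * X ^ 2 + ε * Y ^ 2) * (ε * A ^ 2 + ℓ * Bq ^ 2) := key1
      _ ≤ (ℓ * X ^ 2 + ε * Y ^ 2) * (ℓ * ε * P) := by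
          apply mul_le_mul_of_nonneg_left hf' hR
  rcases hP0.eq_or_lt with h | hPpos
  · rw [← h]; exact hR
  · nlinarith [mul_pos (mul_pos hℓ hε) hPpos]
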